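/- Let r ≥ 2 be an integer and let G be a finite simple graph with maximum degree Δ(G). Then the r-hued chromatic number of G satisfies χ_r(G) ≤ (r − 1)(Δ(G) + 1) + 2. -/

import Mathlib

open SimpleGraph

/-- A proper coloring `φ : V → Fin k` is `r`-hued if every vertex sees at least
`min r (deg v)` distinct colors on its neighborhood. -/
def IsRHuedColoring {V : Type*} (G : SimpleGraph V) (r k : ℕ) (φ : V → Fin k) : Prop :=
  (∀ ⦃u v⦄, G.Adj u v → φ u ≠ φ v) ∧
  ∀ v : V, min r (G.neighborSet v).ncard ≤ (φ '' G.neighborSet v).ncard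

/-- The `r`-hued chromatic number of a graph: the least `k` admitting an `r`-hued
`k`-coloring. -/
noncomputable def rHuedChromNum {V : Type*} (G : SimpleGraph V) (r : ℕ) : ℕ :=
  sInf {k | ∃ φ : V → Fin k, IsRHuedColoring G r k φ}

/-- The maximum degree of a finite simple graph. -/
noncomputable def maxDeg {V : Type*} [Fintype V] (G : SimpleGraph V) : ℕ :=
  Finset.univ.sup fun v => (G.neighborSet v).ncard

private lemma huedAux_pointwise (a D d e : ℕ) (hde : d + e ≤ D) :
    d + (a + 1) * min (a + 2) d + (a + 1) * e ≤ (a + 1) * D + (a + 2) := by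
  rcases le_total d (a + 2) with hd | hd
  · rw [min_eq_right hd]
    have h1 : (a + 1) * (d + e) ≤ (a + 1) * D := Nat.mul_le_mul_left _ hde
    nlinarith
  · rw [min_eq_left hd]
    have h1 : (a + 1) * (d + e) ≤ (a + 1) * D := Nat.mul_le_mul_left _ hde
    have h2 : a * (a + 2) ≤ a * d := Nat.mul_le_mul_left _ hd
    nlinarith

/-- Greedy coloring of a `D`-degenerate symmetric relation with `D < k` colors. -/
private lemma huedAux_coloring {V : Type*} [Fintype V] [DecidableEq V]
    (R : V → V → Prop) [DecidableRel R] (hsymm : ∀ x y, R x y → R y x)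
    (hirr : ∀ x, ¬ R x x) {D k : ℕ} (hDk : D < k)
    (hlight : ∀ X : Finset V, X.Nonempty → ∃ x ∈ X, (X.filter (fun y => R x y)).card ≤ D) :
    ∃ φ : V → Fin k, ∀ x y, R x y → φ x ≠ φ y := by
  have hkpos : 0 < k := Nat.lt_of_le_of_lt (Nat.zero_le D) hDk
  have key : ∀ n (A : Finset V), A.card ≤ n →
      ∃ φ : V → Fin k, ∀ x ∈ A, ∀ y ∈ A, R x y → φ x ≠ φ y := by
    intro n
    induction n with
    | zero =>
      intro A hA
      refine ⟨fun _ => ⟨0, hkpos⟩, ?_⟩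
      have : A = ∅ := Finset.card_eq_zero.mp (Nat.le_zero.mp hA)
      subst this
      intro x hx
      simp at hx
    | succ n ih =>
      intro A hA
      rcases A.eq_empty_or_nonempty with rfl | hne
      · exact ⟨fun _ => ⟨0, hkpos⟩, by simp⟩
      obtain ⟨x, hxA, hxlight⟩ := hlight A hne
      obtain ⟨φ, hφ⟩ := ih (A.erase x) (by
        have := Finset.card_erase_of_mem hxA
        omega)
      set F : Finset (Fin k) := ((A.erase x).filter (fun y => R x y)).image φ with hF
      have hFcard : F.card ≤ D := by
        refine le_trans Finset.card_image_le (le_trans (Finset.card_le_card ?_) hxlight)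
        intro y hy
        simp only [Finset.mem_filter, Finset.mem_erase] at hy ⊢
        exact ⟨hy.1.2, hy.2⟩
      have hex : ∃ c : Fin k, c ∉ F := by
        by_contra h
        push_neg at h
        have hsub : (Finset.univ : Finset (Fin k)) ⊆ F := fun c _ => h c
        have := Finset.card_le_card hsub
        simp only [Finset.card_univ, Fintype.card_fin] at this
        omega
      obtain ⟨c, hc⟩ := hex
      refine ⟨Function.update φ x c, ?_⟩
      intro u hu w hw hR
      by_cases hux : u = x <;> by_cases hwx : w = x
      · rw [hux, hwx] at hR
        exact absurd hR (hirr x)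
      · rw [hux] at hR ⊢
        have hwmem : w ∈ (A.erase x).filter (fun y => R x y) :=
          Finset.mem_filter.mpr ⟨Finset.mem_erase.mpr ⟨hwx, hw⟩, hR⟩
        have : φ w ∈ F := Finset.mem_image_of_mem φ hwmem
        rw [Function.update_self, Function.update_of_ne hwx]
        exact fun hcw => hc (hcw ▸ this)
      · rw [hwx] at hR ⊢
        have humem : u ∈ (A.erase x).filter (fun y => R x y) :=
          Finset.mem_filter.mpr ⟨Finset.mem_erase.mpr ⟨hux, hu⟩, hsymm _ _ hR⟩
        have : φ u ∈ F := Finset.mem_image_of_mem φ humem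
        rw [Function.update_self, Function.update_of_ne hux]
        exact fun hcw => hc (hcw ▸ this)
      · rw [Function.update_of_ne hux, Function.update_of_ne hwx]
        exact hφ u (Finset.mem_erase.mpr ⟨hux, hu⟩) w (Finset.mem_erase.mpr ⟨hwx, hw⟩) hR
  obtain ⟨φ, hφ⟩ := key (Finset.univ.card) Finset.univ le_rfl
  exact ⟨φ, fun x y hR => hφ x (Finset.mem_univ x) y (Finset.mem_univ y) hR⟩

/-- Brooks-type bound: for every finite simple graph `G` and every `r ≥ 2`,
`χ_r(G) ≤ (r - 1)(Δ(G) + 1) + 2`. -/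
theorem rHuedChromNum_le_of_two_le {V : Type*} [Fintype V] (G : SimpleGraph V)
    (r : ℕ) (hr : 2 ≤ r) :
    rHuedChromNum G r ≤ (r - 1) * (maxDeg G + 1) + 2 := by
  classical
  obtain ⟨a, rfl⟩ : ∃ a, r = a + 2 := ⟨r - 2, by omega⟩
  set Δ := maxDeg G with hΔdef
  -- degrees
  have hncard : ∀ x : V, (G.neighborSet x).ncard = (G.neighborFinset x).card := by
    intro x
    rw [SimpleGraph.neighborFinset_def]
    exact Set.ncard_eq_toFinset_card' _
  have hdegΔ : ∀ x : V, (G.neighborFinset x).card ≤ Δ := by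
    intro x
    rw [← hncard]
    show (G.neighborSet x).ncard ≤ maxDeg G
    exact Finset.le_sup (f := fun v => (G.neighborSet v).ncard) (Finset.mem_univ x)
  -- the selection
  have hsel : ∀ w : V, ∃ s : Finset V, s ⊆ G.neighborFinset w ∧
      s.card = min (a + 2) ((G.neighborFinset w).card) := by
    intro w
    have h : min (a + 2) ((G.neighborFinset w).card) ≤ (G.neighborFinset w).card :=
      min_le_right _ _
    obtain ⟨t, ht1, ht2⟩ := Finset.exists_subset_card_eq h
    exact ⟨t, ht1, ht2⟩
  choose S hS1 hS2 using hsel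
  have hSadj : ∀ {x w : V}, x ∈ S w → G.Adj w x := by
    intro x w hx
    exact (SimpleGraph.mem_neighborFinset G w x).mp (hS1 w hx)
  -- the conflict relation
  set R : V → V → Prop := fun x y => x ≠ y ∧ (G.Adj x y ∨ ∃ w, x ∈ S w ∧ y ∈ S w) with hRdef
  have hsymm : ∀ x y, R x y → R y x := by
    rintro x y ⟨hne, hadj | ⟨w, h1, h2⟩⟩
    · exact ⟨hne.symm, Or.inl hadj.symm⟩
    · exact ⟨hne.symm, Or.inr ⟨w, h2, h1⟩⟩
  have hirr : ∀ x, ¬ R x x := fun x h => h.1 rfl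
  -- the degeneracy bound
  set B := (a + 1) * Δ + (a + 2) with hBdef
  have hlight : ∀ X : Finset V, X.Nonempty →
      ∃ x ∈ X, (X.filter (fun y => R x y)).card ≤ B := by
    intro X hX
    by_contra hcon
    push_neg at hcon
    have hXpos : 0 < X.card := Finset.card_pos.mpr hX
    -- lower bound on sum
    have hlb : X.card * (B + 1) ≤ ∑ x ∈ X, (X.filter (fun y => R x y)).card := by
      have := Finset.card_nsmul_le_sum X (fun x => (X.filter (fun y => R x y)).card) (B + 1)
        (fun x hx => hcon x hx)
      simpa [smul_eq_mul] using this
    -- upper bound on sum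
    have hub : ∑ x ∈ X, (X.filter (fun y => R x y)).card ≤ X.card * B := by
      -- per-vertex estimate
      have key : ∀ x ∈ X, (X.filter (fun y => R x y)).card ≤
          (G.neighborFinset x ∩ X).card +
          ∑ w ∈ Finset.univ.filter (fun w => x ∈ S w), ((S w ∩ X).card - 1) := by
        intro x hx
        have hsub : X.filter (fun y => R x y) ⊆
            (G.neighborFinset x ∩ X) ∪
            (Finset.univ.filter (fun w => x ∈ S w)).biUnion (fun w => (S w ∩ X).erase x) := by
          intro y hy
          rw [Finset.mem_filter] at hy
          obtain ⟨hyX, hne, hcase⟩ := hy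
          rcases hcase with hadj | ⟨w, hxw, hyw⟩
          · exact Finset.mem_union_left _
              (Finset.mem_inter.mpr ⟨(SimpleGraph.mem_neighborFinset G x y).mpr hadj, hyX⟩)
          · refine Finset.mem_union_right _ (Finset.mem_biUnion.mpr
              ⟨w, Finset.mem_filter.mpr ⟨Finset.mem_univ _, hxw⟩, ?_⟩)
            exact Finset.mem_erase.mpr ⟨hne.symm, Finset.mem_inter.mpr ⟨hyw, hyX⟩⟩
        calc (X.filter (fun y => R x y)).card
            ≤ ((G.neighborFinset x ∩ X) ∪
              (Finset.univ.filter (fun w => x ∈ S w)).biUnion (fun w => (S w ∩ X).erase x)).card :=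
              Finset.card_le_card hsub
          _ ≤ (G.neighborFinset x ∩ X).card +
              ((Finset.univ.filter (fun w => x ∈ S w)).biUnion (fun w => (S w ∩ X).erase x)).card :=
              Finset.card_union_le _ _
          _ ≤ (G.neighborFinset x ∩ X).card +
              ∑ w ∈ Finset.univ.filter (fun w => x ∈ S w), ((S w ∩ X).erase x).card :=
              Nat.add_le_add_left (Finset.card_biUnion_le) _
          _ = (G.neighborFinset x ∩ X).card +
              ∑ w ∈ Finset.univ.filter (fun w => x ∈ S w), ((S w ∩ X).card - 1) := by
              congr 1
              refine Finset.sum_congr rfl (fun w hw => ?_)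
              rw [Finset.mem_filter] at hw
              exact Finset.card_erase_of_mem (Finset.mem_inter.mpr ⟨hw.2, hx⟩)
      have hsum1 : ∑ x ∈ X, (X.filter (fun y => R x y)).card ≤
          ∑ x ∈ X, ((G.neighborFinset x ∩ X).card +
          ∑ w ∈ Finset.univ.filter (fun w => x ∈ S w), ((S w ∩ X).card - 1)) :=
        Finset.sum_le_sum key
      -- swap the double sum
      have hswap : ∑ x ∈ X, ∑ w ∈ Finset.univ.filter (fun w => x ∈ S w), ((S w ∩ X).card - 1)
          = ∑ w : V, (S w ∩ X).card * ((S w ∩ X).card - 1) := by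
        have e1 : ∀ x ∈ X, ∑ w ∈ Finset.univ.filter (fun w => x ∈ S w), ((S w ∩ X).card - 1)
            = ∑ w : V, if x ∈ S w then (S w ∩ X).card - 1 else 0 :=
          fun x _ => (Finset.sum_filter _ _)
        rw [Finset.sum_congr rfl e1, Finset.sum_comm]
        refine Finset.sum_congr rfl (fun w _ => ?_)
        rw [← Finset.sum_filter]
        have : X.filter (fun x => x ∈ S w) = S w ∩ X := by
          ext z; simp [Finset.mem_inter, and_comm]
        rw [this, Finset.sum_const, smul_eq_mul]
      -- split over w ∈ X or not
      have hsplit : ∑ w : V, (S w ∩ X).card * ((S w ∩ X).card - 1)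
          = ∑ w ∈ X, (S w ∩ X).card * ((S w ∩ X).card - 1)
            + ∑ w ∈ Xᶜ, (S w ∩ X).card * ((S w ∩ X).card - 1) :=
        (Finset.sum_add_sum_compl X _).symm
      -- bound the inside part
      have hin : ∑ w ∈ X, (S w ∩ X).card * ((S w ∩ X).card - 1)
          ≤ ∑ w ∈ X, (a + 1) * min (a + 2) ((G.neighborFinset w ∩ X).card) := by
        refine Finset.sum_le_sum (fun w _ => ?_)
        have h1 : (S w ∩ X).card ≤ a + 2 := by
          have := Finset.card_le_card (Finset.inter_subset_left (s₁ := S w) (s₂ := X))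
          rw [hS2 w] at this
          omega
        have h2 : (S w ∩ X).card ≤ (G.neighborFinset w ∩ X).card :=
          Finset.card_le_card (Finset.inter_subset_inter_right (hS1 w))
        have h3 : (S w ∩ X).card ≤ min (a + 2) ((G.neighborFinset w ∩ X).card) :=
          le_min h1 h2
        calc (S w ∩ X).card * ((S w ∩ X).card - 1)
            ≤ min (a + 2) ((G.neighborFinset w ∩ X).card) * (a + 1) :=
              Nat.mul_le_mul h3 (by omega)
          _ = (a + 1) * min (a + 2) ((G.neighborFinset w ∩ X).card) := Nat.mul_comm _ _
      -- bound the outside part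
      have hout : ∑ w ∈ Xᶜ, (S w ∩ X).card * ((S w ∩ X).card - 1)
          ≤ (a + 1) * ∑ x ∈ X, (G.neighborFinset x \ X).card := by
        have hstep1 : ∑ w ∈ Xᶜ, (S w ∩ X).card * ((S w ∩ X).card - 1)
            ≤ ∑ w ∈ Xᶜ, (a + 1) * (S w ∩ X).card := by
          refine Finset.sum_le_sum (fun w _ => ?_)
          have h1 : (S w ∩ X).card ≤ a + 2 := by
            have := Finset.card_le_card (Finset.inter_subset_left (s₁ := S w) (s₂ := X))
            rw [hS2 w] at this
            omega
          calc (S w ∩ X).card * ((S w ∩ X).card - 1)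
              ≤ (S w ∩ X).card * (a + 1) := Nat.mul_le_mul_left _ (by omega)
            _ = (a + 1) * (S w ∩ X).card := Nat.mul_comm _ _
        have hstep2 : ∑ w ∈ Xᶜ, (S w ∩ X).card ≤ ∑ x ∈ X, (G.neighborFinset x \ X).card := by
          have e2 : ∀ w, (S w ∩ X).card = ∑ x ∈ X, if x ∈ S w then 1 else 0 := by
            intro w
            rw [← Finset.sum_filter]
            have : X.filter (fun x => x ∈ S w) = S w ∩ X := by
              ext z; simp [Finset.mem_inter, and_comm]
            rw [this, Finset.sum_const, smul_eq_mul, Nat.mul_one]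
          calc ∑ w ∈ Xᶜ, (S w ∩ X).card
              = ∑ w ∈ Xᶜ, ∑ x ∈ X, (if x ∈ S w then 1 else 0) := by
                exact Finset.sum_congr rfl (fun w _ => e2 w)
            _ = ∑ x ∈ X, ∑ w ∈ Xᶜ, (if x ∈ S w then 1 else 0) := Finset.sum_comm
            _ = ∑ x ∈ X, (Xᶜ.filter (fun w => x ∈ S w)).card := by
                refine Finset.sum_congr rfl (fun x _ => ?_)
                rw [← Finset.sum_filter, Finset.sum_const, smul_eq_mul, Nat.mul_one]
            _ ≤ ∑ x ∈ X, (G.neighborFinset x \ X).card := by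
                refine Finset.sum_le_sum (fun x _ => Finset.card_le_card ?_)
                intro w hw
                rw [Finset.mem_filter, Finset.mem_compl] at hw
                refine Finset.mem_sdiff.mpr ⟨?_, hw.1⟩
                exact (SimpleGraph.mem_neighborFinset G x w).mpr (hSadj hw.2).symm
        calc ∑ w ∈ Xᶜ, (S w ∩ X).card * ((S w ∩ X).card - 1)
            ≤ ∑ w ∈ Xᶜ, (a + 1) * (S w ∩ X).card := hstep1
          _ = (a + 1) * ∑ w ∈ Xᶜ, (S w ∩ X).card := by rw [Finset.mul_sum]
          _ ≤ (a + 1) * ∑ x ∈ X, (G.neighborFinset x \ X).card :=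
              Nat.mul_le_mul_left _ hstep2
      -- combine everything pointwise
      have hpoint : ∑ x ∈ X, ((G.neighborFinset x ∩ X).card
            + (a + 1) * min (a + 2) ((G.neighborFinset x ∩ X).card)
            + (a + 1) * (G.neighborFinset x \ X).card)
          ≤ ∑ x ∈ X, B := by
        refine Finset.sum_le_sum (fun x _ => ?_)
        have hde : (G.neighborFinset x ∩ X).card + (G.neighborFinset x \ X).card ≤ Δ := by
          rw [Finset.card_inter_add_card_sdiff]
          exact hdegΔ x
        exact huedAux_pointwise a Δ _ _ hde
      calc ∑ x ∈ X, (X.filter (fun y => R x y)).card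
          ≤ ∑ x ∈ X, ((G.neighborFinset x ∩ X).card +
            ∑ w ∈ Finset.univ.filter (fun w => x ∈ S w), ((S w ∩ X).card - 1)) := hsum1
        _ = ∑ x ∈ X, (G.neighborFinset x ∩ X).card +
            ∑ x ∈ X, ∑ w ∈ Finset.univ.filter (fun w => x ∈ S w), ((S w ∩ X).card - 1) :=
            Finset.sum_add_distrib
        _ = ∑ x ∈ X, (G.neighborFinset x ∩ X).card +
            (∑ w ∈ X, (S w ∩ X).card * ((S w ∩ X).card - 1)
              + ∑ w ∈ Xᶜ, (S w ∩ X).card * ((S w ∩ X).card - 1)) := by rw [hswap, hsplit]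
        _ ≤ ∑ x ∈ X, (G.neighborFinset x ∩ X).card +
            (∑ w ∈ X, (a + 1) * min (a + 2) ((G.neighborFinset w ∩ X).card)
              + (a + 1) * ∑ x ∈ X, (G.neighborFinset x \ X).card) :=
            Nat.add_le_add_left (Nat.add_le_add hin hout) _
        _ = ∑ x ∈ X, ((G.neighborFinset x ∩ X).card
              + (a + 1) * min (a + 2) ((G.neighborFinset x ∩ X).card)
              + (a + 1) * (G.neighborFinset x \ X).card) := by
            rw [Finset.mul_sum]
            rw [← Finset.sum_add_distrib, ← Finset.sum_add_distrib]
            exact Finset.sum_congr rfl fun x _ => (Nat.add_assoc _ _ _).symm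
        _ ≤ ∑ x ∈ X, B := hpoint
        _ = X.card * B := by rw [Finset.sum_const, smul_eq_mul]
    have hexp : X.card * (B + 1) = X.card * B + X.card := by ring
    omega
  -- produce the coloring
  have hk : B < (a + 2 - 1) * (Δ + 1) + 2 := by
    have : (a + 2 - 1) = a + 1 := rfl
    rw [this, hBdef]
    ring_nf
    omega
  obtain ⟨φ, hφ⟩ := huedAux_coloring R hsymm hirr hk hlight
  -- it is an r-hued coloring
  have hcol : IsRHuedColoring G (a + 2) ((a + 2 - 1) * (maxDeg G + 1) + 2) φ := by
    constructor
    · intro u v hadj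
      exact hφ u v ⟨G.ne_of_adj hadj, Or.inl hadj⟩
    · intro v
      have hinj : Set.InjOn φ (S v : Set V) := by
        intro x hx y hy hxy
        by_contra hne
        exact hφ x y ⟨hne, Or.inr ⟨v, hx, hy⟩⟩ hxy
      have h1 : (φ '' (S v : Set V)).ncard = (S v).card := by
        rw [Set.ncard_image_of_injOn hinj, Set.ncard_coe_finset]
      have h2 : φ '' (S v : Set V) ⊆ φ '' G.neighborSet v := by
        refine Set.image_mono ?_
        intro x hx
        have : x ∈ S v := hx
        exact (SimpleGraph.mem_neighborSet G v x).mpr (hSadj this)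
      have h3 : (φ '' (S v : Set V)).ncard ≤ (φ '' G.neighborSet v).ncard :=
        Set.ncard_le_ncard h2 (Set.toFinite _)
      calc min (a + 2) (G.neighborSet v).ncard
          = min (a + 2) ((G.neighborFinset v).card) := by rw [hncard]
        _ = (S v).card := (hS2 v).symm
        _ = (φ '' (S v : Set V)).ncard := h1.symm
        _ ≤ (φ '' G.neighborSet v).ncard := h3
  exact Nat.sInf_le ⟨φ, hcol⟩
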